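/- For all natural numbers p and q, the real Clifford algebra Cl_{p+1,q+1}(ℝ) is isomorphic, as an ℝ-algebra, to the tensor product Cl_{p,q}(ℝ) ⊗_ℝ M_2(ℝ), where M_2(ℝ) is the algebra of 2 × 2 real matrices. -/

import Mathlib

set_option maxHeartbeats 1000000
set_option synthInstance.maxHeartbeats 400000

/-- The quadratic form of signature `(p, q)` on `Fin (p+q) → ℝ`:
`Q(v) = ∑_{i < p} v i ^ 2 - ∑_{p ≤ i < p+q} v i ^ 2`. -/
noncomputable def Qpq (p q : ℕ) : QuadraticForm ℝ (Fin (p + q) → ℝ) :=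
  QuadraticMap.weightedSumSquares ℝ
    (fun i : Fin (p + q) => if (i : ℕ) < p then (1 : ℝ) else -1)

namespace CP11
variable (p q : ℕ)

def emb (i : Fin (p + q)) : Fin ((p + 1) + (q + 1)) :=
  if (i : ℕ) < p then ⟨i, by omega⟩ else ⟨(i : ℕ) + 1, by omega⟩

def ip : Fin ((p + 1) + (q + 1)) := ⟨p, by omega⟩
def il : Fin ((p + 1) + (q + 1)) := ⟨p + q + 1, by omega⟩

lemma ip_coe : ((ip p q : ℕ)) = p := rfl
lemma il_coe : ((il p q : ℕ)) = p + q + 1 := rfl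

lemma emb_coe_lt {i : Fin (p + q)} (h : (i : ℕ) < p) : ((emb p q i : ℕ)) = i := by
  simp [emb, h]

lemma emb_coe_ge {i : Fin (p + q)} (h : ¬ (i : ℕ) < p) : ((emb p q i : ℕ)) = (i : ℕ) + 1 := by
  simp [emb, h]

lemma emb_ne_ip (i : Fin (p + q)) : emb p q i ≠ ip p q := by
  intro h
  have h2 := congrArg Fin.val h
  rw [ip_coe] at h2
  by_cases hc : (i : ℕ) < p
  · rw [emb_coe_lt p q hc] at h2; omega
  · rw [emb_coe_ge p q hc] at h2; omega

lemma emb_ne_il (i : Fin (p + q)) : emb p q i ≠ il p q := by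
  intro h
  have h2 := congrArg Fin.val h
  rw [il_coe] at h2
  have := i.2
  by_cases hc : (i : ℕ) < p
  · rw [emb_coe_lt p q hc] at h2; omega
  · rw [emb_coe_ge p q hc] at h2; omega

def rixInv (j : Fin ((p + 1) + (q + 1))) : Fin (p + q) ⊕ Fin 2 :=
  if h : (j : ℕ) < p then Sum.inl ⟨j, by omega⟩
  else if h2 : (j : ℕ) = p then Sum.inr 0
  else if h3 : (j : ℕ) < p + q + 1 then Sum.inl ⟨(j : ℕ) - 1, by omega⟩
  else Sum.inr 1

lemma rixInv_emb (i : Fin (p + q)) : rixInv p q (emb p q i) = Sum.inl i := by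
  unfold rixInv
  by_cases h : (i : ℕ) < p
  · have hc := emb_coe_lt p q h
    rw [dif_pos (by omega)]
    exact congrArg Sum.inl (Fin.ext (by simp [hc]))
  · have hc := emb_coe_ge p q h
    have hi2 := i.2
    rw [dif_neg (by omega), dif_neg (by omega), dif_pos (by omega)]
    exact congrArg Sum.inl (Fin.ext (by simp [hc]))

lemma rixInv_ip : rixInv p q (ip p q) = Sum.inr 0 := by
  unfold rixInv
  rw [dif_neg (by rw [ip_coe]; omega), dif_pos (ip_coe p q)]

lemma rixInv_il : rixInv p q (il p q) = Sum.inr 1 := by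
  unfold rixInv
  rw [dif_neg (by rw [il_coe]; omega), dif_neg (by rw [il_coe]; omega),
    dif_neg (by rw [il_coe]; omega)]

/-- The reindexing equivalence. -/
def reix : (Fin (p + q) ⊕ Fin 2) ≃ Fin ((p + 1) + (q + 1)) where
  toFun := Sum.elim (emb p q) ![ip p q, il p q]
  invFun := rixInv p q
  left_inv x := by
    rcases x with i | k
    · exact rixInv_emb p q i
    · fin_cases k
      · exact rixInv_ip p q
      · exact rixInv_il p q
  right_inv j := by
    unfold rixInv
    by_cases h : (j : ℕ) < p
    · rw [dif_pos h]
      exact Fin.ext (by rw [Sum.elim_inl, emb_coe_lt p q (by simpa using h)])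
    · by_cases h2 : (j : ℕ) = p
      · rw [dif_neg h, dif_pos h2]
        show ip p q = j
        exact Fin.ext (by rw [ip_coe]; omega)
      · by_cases h3 : (j : ℕ) < p + q + 1
        · rw [dif_neg h, dif_neg h2, dif_pos h3]
          refine Fin.ext ?_
          rw [Sum.elim_inl, emb_coe_ge p q (by simp; omega)]
          simp; omega
        · rw [dif_neg h, dif_neg h2, dif_neg h3]
          show il p q = j
          exact Fin.ext (by rw [il_coe]; have := j.2; omega)

/-- Key sum decomposition for the quadratic form. -/
lemma Qpq_succ_apply (v : Fin ((p + 1) + (q + 1)) → ℝ) :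
    Qpq (p + 1) (q + 1) v
      = Qpq p q (v ∘ emb p q) + v (ip p q) * v (ip p q) - v (il p q) * v (il p q) := by
  simp only [Qpq, QuadraticMap.weightedSumSquares_apply]
  rw [← Equiv.sum_comp (reix p q)]
  rw [Fintype.sum_sum_type]
  simp only [reix, Equiv.coe_fn_mk, Sum.elim_inl, Sum.elim_inr, Fin.sum_univ_two,
    Matrix.cons_val_zero, Matrix.cons_val_one, Matrix.head_cons]
  have h1 : ∀ i : Fin (p + q),
      (if ((emb p q i : ℕ)) < p + 1 then (1:ℝ) else -1) • (v (emb p q i) * v (emb p q i))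
        = (if (i : ℕ) < p then (1:ℝ) else -1) • ((v ∘ emb p q) i * (v ∘ emb p q) i) := by
    intro i
    by_cases h : (i : ℕ) < p
    · rw [if_pos (by rw [emb_coe_lt p q h]; omega), if_pos h]; rfl
    · rw [if_neg (by rw [emb_coe_ge p q h]; omega), if_neg h]; rfl
  erw [Finset.sum_congr rfl (fun i _ => h1 i)]
  erw [if_pos (by rw [ip_coe]; omega), if_neg (by rw [il_coe]; omega)]
  simp only [← pow_two, smul_eq_mul]
  ring

lemma Qpq_succ_apply' (v : Fin ((p + 1) + (q + 1)) → ℝ) :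
    Qpq (p + 1) (q + 1) v
      = Qpq p q (v ∘ emb p q) + v (ip p q) ^ 2 - v (il p q) ^ 2 := by
  rw [Qpq_succ_apply]; ring

/-- Extension of a vector by zero at the two distinguished coordinates, as a linear map. -/
def extL : (Fin (p + q) → ℝ) →ₗ[ℝ] (Fin ((p + 1) + (q + 1)) → ℝ) where
  toFun w j :=
    if h : (j : ℕ) < p then w ⟨j, by omega⟩
    else if h2 : p < (j : ℕ) ∧ (j : ℕ) < p + q + 1 then w ⟨(j : ℕ) - 1, by omega⟩
    else 0
  map_add' w₁ w₂ := by
    funext j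
    by_cases h : (j : ℕ) < p
    · simp [dif_pos h]
    · by_cases h2 : p < (j : ℕ) ∧ (j : ℕ) < p + q + 1
      · simp [dif_neg h, dif_pos (show p < (j : ℕ) ∧ (j : ℕ) ≤ p + q by omega)]
      · simp [dif_neg h, dif_neg (show ¬ (p < (j : ℕ) ∧ (j : ℕ) ≤ p + q) by omega)]
  map_smul' c w := by
    funext j
    by_cases h : (j : ℕ) < p
    · simp [dif_pos h]
    · by_cases h2 : p < (j : ℕ) ∧ (j : ℕ) < p + q + 1
      · simp [dif_neg h, dif_pos h2]
      · simp [dif_neg h, dif_neg h2]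

lemma extL_emb (w : Fin (p + q) → ℝ) (i : Fin (p + q)) :
    extL p q w (emb p q i) = w i := by
  show dite _ _ _ = _
  by_cases h : (i : ℕ) < p
  · have hc := emb_coe_lt p q h
    rw [dif_pos (by omega)]
    congr 1
    exact Fin.ext (by simp [hc])
  · have hc := emb_coe_ge p q h
    have hi2 := i.2
    rw [dif_neg (by omega), dif_pos (by omega)]
    congr 1
    exact Fin.ext (by simp [hc])

lemma extL_comp_emb (w : Fin (p + q) → ℝ) : (extL p q w) ∘ (emb p q) = w :=
  funext fun i => extL_emb p q w i

lemma extL_ip (w : Fin (p + q) → ℝ) : extL p q w (ip p q) = 0 := by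
  show dite _ _ _ = _
  rw [dif_neg (by rw [ip_coe]; omega), dif_neg (by rw [ip_coe]; omega)]

lemma extL_il (w : Fin (p + q) → ℝ) : extL p q w (il p q) = 0 := by
  show dite _ _ _ = _
  rw [dif_neg (by rw [il_coe]; omega), dif_neg (by rw [il_coe]; omega)]

lemma single_ip_emb (i : Fin (p + q)) :
    (Pi.single (ip p q) 1 : Fin ((p + 1) + (q + 1)) → ℝ) (emb p q i) = 0 :=
  Pi.single_eq_of_ne (emb_ne_ip p q i) 1

lemma single_il_emb (i : Fin (p + q)) :
    (Pi.single (il p q) 1 : Fin ((p + 1) + (q + 1)) → ℝ) (emb p q i) = 0 :=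
  Pi.single_eq_of_ne (emb_ne_il p q i) 1

lemma ip_ne_il : ip p q ≠ il p q := by
  intro h
  have := congrArg Fin.val h
  rw [ip_coe, il_coe] at this; omega

/-- Reconstruction of a vector from its three pieces. -/
lemma reconstruct (v : Fin ((p + 1) + (q + 1)) → ℝ) :
    extL p q (v ∘ emb p q)
      + v (ip p q) • (Pi.single (ip p q) 1 : Fin ((p + 1) + (q + 1)) → ℝ)
      + v (il p q) • (Pi.single (il p q) 1 : Fin ((p + 1) + (q + 1)) → ℝ) = v := by
  funext j
  simp only [Pi.add_apply, Pi.smul_apply, smul_eq_mul]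
  rcases (reix p q).surjective j with ⟨x, rfl⟩
  rcases x with i | k
  · have e1 : reix p q (Sum.inl i) = emb p q i := rfl
    rw [e1, extL_emb, single_ip_emb, single_il_emb]
    simp [Function.comp]
  · fin_cases k <;> dsimp only [Fin.mk_zero, Fin.mk_one]
    · have e1 : reix p q (Sum.inr (0 : Fin 2)) = ip p q := rfl
      rw [e1, extL_ip, Pi.single_eq_same, Pi.single_eq_of_ne (ip_ne_il p q)]
      simp
    · have e1 : reix p q (Sum.inr (1 : Fin 2)) = il p q := rfl
      rw [e1, extL_il, Pi.single_eq_same, Pi.single_eq_of_ne (Ne.symm (ip_ne_il p q))]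
      simp

/-- Values of `Qpq` on extended vectors and singles. -/
lemma Qpq_extL (w : Fin (p + q) → ℝ) :
    Qpq (p + 1) (q + 1) (extL p q w) = Qpq p q w := by
  rw [Qpq_succ_apply, extL_comp_emb, extL_ip, extL_il]; ring

lemma Qpq_single_ip : Qpq (p + 1) (q + 1) (Pi.single (ip p q) (1:ℝ)) = 1 := by
  rw [Qpq_succ_apply]
  have h0 : (Pi.single (ip p q) (1:ℝ)) ∘ emb p q = 0 :=
    funext fun i => single_ip_emb p q i
  rw [h0, Pi.single_eq_same, Pi.single_eq_of_ne (Ne.symm (ip_ne_il p q)), map_zero]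
  ring

lemma Qpq_single_il : Qpq (p + 1) (q + 1) (Pi.single (il p q) (1:ℝ)) = -1 := by
  rw [Qpq_succ_apply]
  have h0 : (Pi.single (il p q) (1:ℝ)) ∘ emb p q = 0 :=
    funext fun i => single_il_emb p q i
  rw [h0, Pi.single_eq_same, Pi.single_eq_of_ne (ip_ne_il p q), map_zero]
  ring

/-- Polar form vanishes on pointwise-orthogonal vectors. -/
lemma polar_eq_zero {n m : ℕ} (v w : Fin (n + m) → ℝ)
    (h : ∀ i, v i * w i = 0) :
    QuadraticMap.polar (Qpq n m) v w = 0 := by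
  simp only [QuadraticMap.polar, Qpq, QuadraticMap.weightedSumSquares_apply]
  rw [← Finset.sum_sub_distrib, ← Finset.sum_sub_distrib]
  apply Finset.sum_eq_zero
  intro i _
  have hvw := h i
  simp only [Pi.add_apply, smul_eq_mul]
  split_ifs
  · linear_combination (2:ℝ) * hvw
  · linear_combination (-2:ℝ) * hvw


end CP11

open CliffordAlgebra in
/-- General construction: 2×2 matrix units in an algebra give an algebra hom from `M₂(ℝ)`. -/
def matrixUnitsHom {A : Type*} [Ring A] [Algebra ℝ A] (c : Fin 2 → Fin 2 → A)
    (hone : c 0 0 + c 1 1 = 1)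
    (hmul : ∀ i j k l, c i j * c k l = if j = k then c i l else 0) :
    Matrix (Fin 2) (Fin 2) ℝ →ₐ[ℝ] A :=
  AlgHom.ofLinearMap
    { toFun := fun m => ∑ i, ∑ j, m i j • c i j
      map_add' := fun m n => by
        simp [Matrix.add_apply, add_smul, Finset.sum_add_distrib]
      map_smul' := fun r m => by
        simp [Matrix.smul_apply, smul_smul, Finset.smul_sum] }
    (by
      simp only [LinearMap.coe_mk, AddHom.coe_mk, Fin.sum_univ_two, Matrix.one_apply]
      norm_num
      exact hone)
    (by
      intro m n
      simp only [LinearMap.coe_mk, AddHom.coe_mk, Fin.sum_univ_two, Matrix.mul_apply,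
        add_smul, mul_smul]
      simp only [add_mul, mul_add, smul_mul_smul_comm, hmul]
      norm_num
      module)

lemma matrixUnitsHom_apply {A : Type*} [Ring A] [Algebra ℝ A] (c : Fin 2 → Fin 2 → A)
    (hone : c 0 0 + c 1 1 = 1)
    (hmul : ∀ i j k l, c i j * c k l = if j = k then c i l else 0)
    (m : Matrix (Fin 2) (Fin 2) ℝ) :
    matrixUnitsHom c hone hmul m
      = m 0 0 • c 0 0 + m 0 1 • c 0 1 + (m 1 0 • c 1 0 + m 1 1 • c 1 1) := by
  show ∑ i, ∑ j, m i j • c i j = _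
  simp [Fin.sum_univ_two, add_assoc]

namespace CP11
variable (p q : ℕ)

open CliffordAlgebra

/-- The distinguished positive generator. -/
noncomputable def ee : CliffordAlgebra (Qpq (p + 1) (q + 1)) :=
  ι (Qpq (p + 1) (q + 1)) (Pi.single (ip p q) 1)

/-- The distinguished negative generator. -/
noncomputable def ff : CliffordAlgebra (Qpq (p + 1) (q + 1)) :=
  ι (Qpq (p + 1) (q + 1)) (Pi.single (il p q) 1)

/-- Their product, a square root of 1 anticommuting with both. -/
noncomputable def uu : CliffordAlgebra (Qpq (p + 1) (q + 1)) := ff p q * ee p q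

lemma ee_sq : ee p q * ee p q = 1 := by
  rw [ee, ι_sq_scalar, Qpq_single_ip, map_one]

lemma ff_sq : ff p q * ff p q = -1 := by
  rw [ff, ι_sq_scalar, Qpq_single_il, map_neg, map_one]

lemma single_ip_mul_single_il (i : Fin ((p + 1) + (q + 1))) :
    (Pi.single (ip p q) 1 : Fin ((p + 1) + (q + 1)) → ℝ) i
      * (Pi.single (il p q) 1 : Fin ((p + 1) + (q + 1)) → ℝ) i = 0 := by
  by_cases h : i = ip p q
  · subst h
    rw [Pi.single_eq_of_ne (ip_ne_il p q), mul_zero]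
  · rw [Pi.single_eq_of_ne h, zero_mul]

lemma ee_ff_anti : ee p q * ff p q = -(ff p q * ee p q) := by
  have h := ι_mul_ι_add_swap (Q := Qpq (p + 1) (q + 1))
    (Pi.single (ip p q) 1) (Pi.single (il p q) 1)
  rw [polar_eq_zero _ _ (single_ip_mul_single_il p q), map_zero] at h
  rw [ee, ff]
  exact eq_neg_of_add_eq_zero_left h

lemma ff_ee : ff p q * ee p q = uu p q := rfl

lemma uu_ee : uu p q * ee p q = ff p q := by
  rw [uu, mul_assoc, ee_sq, mul_one]

lemma ee_uu : ee p q * uu p q = -(ff p q) := by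
  rw [uu, ← mul_assoc, ee_ff_anti, neg_mul, mul_assoc, ee_sq, mul_one]

lemma uu_ff : uu p q * ff p q = ee p q := by
  rw [uu, mul_assoc, ee_ff_anti, mul_neg, ← mul_assoc, ff_sq, neg_mul, one_mul, neg_neg]

lemma ff_uu : ff p q * uu p q = -(ee p q) := by
  rw [uu, ← mul_assoc, ff_sq, neg_mul, one_mul]

lemma ee_ff : ee p q * ff p q = -(uu p q) := by rw [ee_ff_anti, ff_ee]

lemma uu_sq : uu p q * uu p q = 1 := by
  have h : uu p q * uu p q = ff p q * (ee p q * ff p q) * ee p q := by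
    rw [uu]; noncomm_ring
  rw [h, ee_ff, mul_neg, ff_uu, neg_neg, ee_sq]

/-- The 2×2 matrix units inside the big Clifford algebra. -/
noncomputable def cc : Fin 2 → Fin 2 → CliffordAlgebra (Qpq (p + 1) (q + 1)) :=
  ![![(2⁻¹ : ℝ) • (1 + uu p q), (2⁻¹ : ℝ) • (ee p q + ff p q)],
    ![(2⁻¹ : ℝ) • (ee p q - ff p q), (2⁻¹ : ℝ) • (1 - uu p q)]]

lemma cc00 : cc p q 0 0 = (2⁻¹ : ℝ) • (1 + uu p q) := rfl
lemma cc01 : cc p q 0 1 = (2⁻¹ : ℝ) • (ee p q + ff p q) := rfl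
lemma cc10 : cc p q 1 0 = (2⁻¹ : ℝ) • (ee p q - ff p q) := rfl
lemma cc11 : cc p q 1 1 = (2⁻¹ : ℝ) • (1 - uu p q) := rfl

lemma cc_one : cc p q 0 0 + cc p q 1 1 = 1 := by
  rw [cc00, cc11]
  module

lemma cc_mul : ∀ i j k l, cc p q i j * cc p q k l = if j = k then cc p q i l else 0 := by
  intro i j k l
  fin_cases i <;> fin_cases j <;> fin_cases k <;> fin_cases l <;>
    simp only [cc00, cc01, cc10, cc11, Fin.zero_eta, Fin.mk_one, Fin.isValue,
      if_true, if_false, Fin.zero_eq_one_iff, Fin.one_eq_zero_iff, Nat.succ_ne_self,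
      OfNat.ofNat_ne_one, one_ne_zero, reduceIte] <;>
    (rw [smul_mul_smul_comm]
     simp only [mul_add, add_mul, mul_sub, sub_mul, mul_one, one_mul,
       uu_sq, uu_ee, ee_uu, uu_ff, ff_uu, ee_sq, ff_sq, ff_ee, ee_ff]
     module)


end CP11

/-! ### The three distinguished 2×2 matrices -/

def EE : Matrix (Fin 2) (Fin 2) ℝ := !![0, 1; 1, 0]
def FF : Matrix (Fin 2) (Fin 2) ℝ := !![0, 1; -1, 0]
def GG : Matrix (Fin 2) (Fin 2) ℝ := !![1, 0; 0, -1]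

lemma hEE : EE * EE = 1 := by
  ext i j; fin_cases i <;> fin_cases j <;>
    simp [EE, Matrix.mul_apply, Fin.sum_univ_two, Matrix.one_apply]

lemma hFF : FF * FF = -1 := by
  ext i j; fin_cases i <;> fin_cases j <;>
    simp [FF, Matrix.mul_apply, Fin.sum_univ_two, Matrix.one_apply]

lemma hGG : GG * GG = 1 := by
  ext i j; fin_cases i <;> fin_cases j <;>
    simp [GG, Matrix.mul_apply, Fin.sum_univ_two, Matrix.one_apply]

lemma hFE : FF * EE = GG := by
  ext i j; fin_cases i <;> fin_cases j <;>
    simp [EE, FF, GG, Matrix.mul_apply, Fin.sum_univ_two]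

lemma hGE : GG * EE + EE * GG = 0 := by
  ext i j; fin_cases i <;> fin_cases j <;>
    simp [EE, GG, Matrix.mul_apply, Fin.sum_univ_two]

lemma hGF : GG * FF + FF * GG = 0 := by
  ext i j; fin_cases i <;> fin_cases j <;>
    simp [FF, GG, Matrix.mul_apply, Fin.sum_univ_two]

lemma hEF : EE * FF + FF * EE = 0 := by
  ext i j; fin_cases i <;> fin_cases j <;>
    simp [EE, FF, Matrix.mul_apply, Fin.sum_univ_two]

lemma matrix_decomp (y : Matrix (Fin 2) (Fin 2) ℝ) :
    y = y 0 0 • ((2⁻¹:ℝ) • (1 + GG)) + y 0 1 • ((2⁻¹:ℝ) • (EE + FF))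
      + (y 1 0 • ((2⁻¹:ℝ) • (EE - FF)) + y 1 1 • ((2⁻¹:ℝ) • (1 - GG))) := by
  ext i j; fin_cases i <;> fin_cases j <;>
    simp [EE, FF, GG, Matrix.one_apply] <;> ring

namespace CP11
variable (p q : ℕ)
open CliffordAlgebra TensorProduct

/-- The forward linear map. -/
noncomputable def fmap :
    (Fin ((p + 1) + (q + 1)) → ℝ) →ₗ[ℝ]
      (CliffordAlgebra (Qpq p q) ⊗[ℝ] Matrix (Fin 2) (Fin 2) ℝ) :=
  ((TensorProduct.mk ℝ (CliffordAlgebra (Qpq p q)) (Matrix (Fin 2) (Fin 2) ℝ)).flip GG).comp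
      ((ι (Qpq p q)).comp (LinearMap.funLeft ℝ ℝ (emb p q)))
    + (LinearMap.toSpanSingleton ℝ _ ((1 : CliffordAlgebra (Qpq p q)) ⊗ₜ[ℝ] EE)).comp
        (LinearMap.proj (ip p q))
    + (LinearMap.toSpanSingleton ℝ _ ((1 : CliffordAlgebra (Qpq p q)) ⊗ₜ[ℝ] FF)).comp
        (LinearMap.proj (il p q))

lemma fmap_apply (v : Fin ((p + 1) + (q + 1)) → ℝ) :
    fmap p q v = (ι (Qpq p q) (v ∘ emb p q)) ⊗ₜ[ℝ] GG
      + v (ip p q) • ((1 : CliffordAlgebra (Qpq p q)) ⊗ₜ[ℝ] EE)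
      + v (il p q) • ((1 : CliffordAlgebra (Qpq p q)) ⊗ₜ[ℝ] FF) := by
  simp only [fmap, LinearMap.add_apply, LinearMap.comp_apply, LinearMap.flip_apply,
    TensorProduct.mk_apply, LinearMap.funLeft_apply, LinearMap.toSpanSingleton_apply,
    LinearMap.proj_apply]
  rfl

/-- Expansion helper. -/
lemma expand_sq {A : Type*} [Ring A] [Algebra ℝ A] (X Y Z : A) (a b : ℝ) :
    (X + a • Y + b • Z) * (X + a • Y + b • Z)
      = X * X + (a * a) • (Y * Y) + (b * b) • (Z * Z)
        + a • (X * Y + Y * X) + b • (X * Z + Z * X) + (a * b) • (Y * Z + Z * Y) := by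
  simp only [mul_add, add_mul, smul_mul_assoc, mul_smul_comm, smul_smul, smul_add]
  module

lemma fmap_sq (v : Fin ((p + 1) + (q + 1)) → ℝ) :
    fmap p q v * fmap p q v
      = algebraMap ℝ (CliffordAlgebra (Qpq p q) ⊗[ℝ] Matrix (Fin 2) (Fin 2) ℝ)
          (Qpq (p + 1) (q + 1) v) := by
  rw [fmap_apply]
  rw [expand_sq ((ι (Qpq p q)) (v ∘ emb p q) ⊗ₜ[ℝ] GG)
    ((1 : CliffordAlgebra (Qpq p q)) ⊗ₜ[ℝ] EE)
    ((1 : CliffordAlgebra (Qpq p q)) ⊗ₜ[ℝ] FF) (v (ip p q)) (v (il p q))]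
  simp only [Algebra.TensorProduct.tmul_mul_tmul, one_mul, mul_one]
  rw [← TensorProduct.tmul_add, ← TensorProduct.tmul_add, ← TensorProduct.tmul_add,
    hGE, hGF, hEF, hEE, hFF, hGG, ι_sq_scalar]
  simp only [TensorProduct.tmul_zero, smul_zero, add_zero]
  rw [Qpq_succ_apply, map_sub, map_add]
  rw [Algebra.TensorProduct.algebraMap_apply, Algebra.TensorProduct.algebraMap_apply,
    Algebra.TensorProduct.algebraMap_apply]
  rw [Algebra.algebraMap_eq_smul_one (R := ℝ) (A := CliffordAlgebra (Qpq p q))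
      (v (ip p q) * v (ip p q)),
    Algebra.algebraMap_eq_smul_one (R := ℝ) (A := CliffordAlgebra (Qpq p q))
      (v (il p q) * v (il p q))]
  rw [TensorProduct.smul_tmul', TensorProduct.smul_tmul', TensorProduct.tmul_neg]
  module

end CP11

namespace CP11
variable (p q : ℕ)
open CliffordAlgebra TensorProduct

/-- The forward algebra hom. -/
noncomputable def phi :
    CliffordAlgebra (Qpq (p + 1) (q + 1)) →ₐ[ℝ]
      (CliffordAlgebra (Qpq p q) ⊗[ℝ] Matrix (Fin 2) (Fin 2) ℝ) :=
  CliffordAlgebra.lift (Qpq (p + 1) (q + 1)) ⟨fmap p q, fmap_sq p q⟩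

lemma phi_ι (v : Fin ((p + 1) + (q + 1)) → ℝ) :
    phi p q (ι (Qpq (p + 1) (q + 1)) v) = fmap p q v :=
  CliffordAlgebra.lift_ι_apply _ _ _

/-! ### Anticommutation of extended vectors with the distinguished generators -/

lemma extL_mul_single_ip (w : Fin (p + q) → ℝ) (i : Fin ((p + 1) + (q + 1))) :
    extL p q w i * (Pi.single (ip p q) 1 : Fin ((p + 1) + (q + 1)) → ℝ) i = 0 := by
  by_cases h : i = ip p q
  · subst h; rw [extL_ip, zero_mul]
  · rw [Pi.single_eq_of_ne h, mul_zero]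

lemma extL_mul_single_il (w : Fin (p + q) → ℝ) (i : Fin ((p + 1) + (q + 1))) :
    extL p q w i * (Pi.single (il p q) 1 : Fin ((p + 1) + (q + 1)) → ℝ) i = 0 := by
  by_cases h : i = il p q
  · subst h; rw [extL_il, zero_mul]
  · rw [Pi.single_eq_of_ne h, mul_zero]

lemma x_ee_anti (w : Fin (p + q) → ℝ) :
    ι (Qpq (p + 1) (q + 1)) (extL p q w) * ee p q
      = -(ee p q * ι (Qpq (p + 1) (q + 1)) (extL p q w)) := by
  have h := ι_mul_ι_add_swap (Q := Qpq (p + 1) (q + 1)) (extL p q w) (Pi.single (ip p q) 1)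
  rw [polar_eq_zero _ _ (extL_mul_single_ip p q w), map_zero] at h
  rw [ee]
  exact eq_neg_of_add_eq_zero_left h

lemma x_ff_anti (w : Fin (p + q) → ℝ) :
    ι (Qpq (p + 1) (q + 1)) (extL p q w) * ff p q
      = -(ff p q * ι (Qpq (p + 1) (q + 1)) (extL p q w)) := by
  have h := ι_mul_ι_add_swap (Q := Qpq (p + 1) (q + 1)) (extL p q w) (Pi.single (il p q) 1)
  rw [polar_eq_zero _ _ (extL_mul_single_il p q w), map_zero] at h
  rw [ff]
  exact eq_neg_of_add_eq_zero_left h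

lemma x_uu_comm (w : Fin (p + q) → ℝ) :
    ι (Qpq (p + 1) (q + 1)) (extL p q w) * uu p q
      = uu p q * ι (Qpq (p + 1) (q + 1)) (extL p q w) := by
  set x := ι (Qpq (p + 1) (q + 1)) (extL p q w) with hx
  calc x * (ff p q * ee p q) = (x * ff p q) * ee p q := by rw [mul_assoc]
    _ = -(ff p q * x) * ee p q := by rw [x_ff_anti]
    _ = -(ff p q * (x * ee p q)) := by rw [neg_mul, mul_assoc]
    _ = -(ff p q * -(ee p q * x)) := by rw [x_ee_anti]
    _ = (ff p q * ee p q) * x := by rw [mul_neg, neg_neg, mul_assoc]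

/-- The first factor hom: `Cl(p,q) → Cl(p+1,q+1)`. -/
noncomputable def fmap1 :
    (Fin (p + q) → ℝ) →ₗ[ℝ] CliffordAlgebra (Qpq (p + 1) (q + 1)) :=
  (LinearMap.mulRight ℝ (uu p q)).comp ((ι (Qpq (p + 1) (q + 1))).comp (extL p q))

lemma fmap1_apply (w : Fin (p + q) → ℝ) :
    fmap1 p q w = ι (Qpq (p + 1) (q + 1)) (extL p q w) * uu p q := rfl

lemma fmap1_sq (w : Fin (p + q) → ℝ) :
    fmap1 p q w * fmap1 p q w
      = algebraMap ℝ (CliffordAlgebra (Qpq (p + 1) (q + 1))) (Qpq p q w) := by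
  rw [fmap1_apply]
  have hc := x_uu_comm p q w
  have hxx : ι (Qpq (p + 1) (q + 1)) (extL p q w) * ι (Qpq (p + 1) (q + 1)) (extL p q w)
      = algebraMap ℝ (CliffordAlgebra (Qpq (p + 1) (q + 1))) (Qpq p q w) := by
    rw [ι_sq_scalar, Qpq_extL]
  have hu := uu_sq p q
  generalize hg : ι (Qpq (p + 1) (q + 1)) (extL p q w) = x at hc hxx ⊢
  generalize hgu : uu p q = u at hc hu ⊢
  calc (x * u) * (x * u) = x * ((u * x) * u) := by noncomm_ring
    _ = x * ((x * u) * u) := by rw [← hc]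
    _ = (x * x) * (u * u) := by noncomm_ring
    _ = _ := by rw [hxx, hu, mul_one]

noncomputable def g1 :
    CliffordAlgebra (Qpq p q) →ₐ[ℝ] CliffordAlgebra (Qpq (p + 1) (q + 1)) :=
  CliffordAlgebra.lift (Qpq p q) ⟨fmap1 p q, fmap1_sq p q⟩

lemma g1_ι (w : Fin (p + q) → ℝ) :
    g1 p q (ι (Qpq p q) w) = ι (Qpq (p + 1) (q + 1)) (extL p q w) * uu p q :=
  CliffordAlgebra.lift_ι_apply _ _ _

noncomputable def g2 :
    Matrix (Fin 2) (Fin 2) ℝ →ₐ[ℝ] CliffordAlgebra (Qpq (p + 1) (q + 1)) :=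
  matrixUnitsHom (cc p q) (cc_one p q) (cc_mul p q)

lemma g2_apply (m : Matrix (Fin 2) (Fin 2) ℝ) :
    g2 p q m = m 0 0 • cc p q 0 0 + m 0 1 • cc p q 0 1
      + (m 1 0 • cc p q 1 0 + m 1 1 • cc p q 1 1) :=
  matrixUnitsHom_apply _ _ _ m

/-! ### Commutation of the two images -/

lemma xu_commute_ee (w : Fin (p + q) → ℝ) :
    Commute (ι (Qpq (p + 1) (q + 1)) (extL p q w) * uu p q) (ee p q) := by
  set x := ι (Qpq (p + 1) (q + 1)) (extL p q w) with hx
  have hex : ee p q * x = -(x * ee p q) := by rw [x_ee_anti, neg_neg]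
  show (x * uu p q) * ee p q = ee p q * (x * uu p q)
  calc (x * uu p q) * ee p q = x * (uu p q * ee p q) := by rw [mul_assoc]
    _ = x * ff p q := by rw [uu_ee]
    _ = -(x * (ee p q * uu p q)) := by rw [ee_uu, mul_neg, neg_neg]
    _ = (-(x * ee p q)) * uu p q := by rw [neg_mul, mul_assoc]
    _ = (ee p q * x) * uu p q := by rw [← hex]
    _ = ee p q * (x * uu p q) := by rw [mul_assoc]

lemma xu_commute_ff (w : Fin (p + q) → ℝ) :
    Commute (ι (Qpq (p + 1) (q + 1)) (extL p q w) * uu p q) (ff p q) := by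
  set x := ι (Qpq (p + 1) (q + 1)) (extL p q w) with hx
  have hfx : ff p q * x = -(x * ff p q) := by rw [x_ff_anti, neg_neg]
  show (x * uu p q) * ff p q = ff p q * (x * uu p q)
  calc (x * uu p q) * ff p q = x * (uu p q * ff p q) := by rw [mul_assoc]
    _ = x * ee p q := by rw [uu_ff]
    _ = -(x * (ff p q * uu p q)) := by rw [ff_uu, mul_neg, neg_neg]
    _ = (-(x * ff p q)) * uu p q := by rw [neg_mul, mul_assoc]
    _ = (ff p q * x) * uu p q := by rw [← hfx]
    _ = ff p q * (x * uu p q) := by rw [mul_assoc]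

lemma xu_commute_uu (w : Fin (p + q) → ℝ) :
    Commute (ι (Qpq (p + 1) (q + 1)) (extL p q w) * uu p q) (uu p q) := by
  show (ι (Qpq (p + 1) (q + 1)) (extL p q w) * uu p q) * uu p q
      = uu p q * (ι (Qpq (p + 1) (q + 1)) (extL p q w) * uu p q)
  rw [mul_assoc, ← mul_assoc (uu p q), ← x_uu_comm, mul_assoc]

lemma xu_commute_cc (w : Fin (p + q) → ℝ) (i j : Fin 2) :
    Commute (ι (Qpq (p + 1) (q + 1)) (extL p q w) * uu p q) (cc p q i j) := by
  have he := xu_commute_ee p q w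
  have hf := xu_commute_ff p q w
  have hu := xu_commute_uu p q w
  have h1 : Commute (ι (Qpq (p + 1) (q + 1)) (extL p q w) * uu p q)
      (1 : CliffordAlgebra (Qpq (p + 1) (q + 1))) := Commute.one_right _
  fin_cases i <;> fin_cases j <;>
    simp only [cc00, cc01, cc10, cc11] <;>
    first
    | exact ((h1.add_right hu).smul_right _)
    | exact ((he.add_right hf).smul_right _)
    | exact ((he.sub_right hf).smul_right _)
    | exact ((h1.sub_right hu).smul_right _)

lemma g_commute : ∀ (x : CliffordAlgebra (Qpq p q)) (m : Matrix (Fin 2) (Fin 2) ℝ),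
    Commute (g1 p q x) (g2 p q m) := by
  intro x m
  have hcc : ∀ y : CliffordAlgebra (Qpq p q),
      (∀ i j, Commute (g1 p q y) (cc p q i j)) → Commute (g1 p q y) (g2 p q m) := by
    intro y hy
    rw [g2_apply]
    exact (((hy 0 0).smul_right _).add_right ((hy 0 1).smul_right _)).add_right
      (((hy 1 0).smul_right _).add_right ((hy 1 1).smul_right _))
  induction x using CliffordAlgebra.induction with
  | algebraMap r =>
      rw [AlgHom.commutes]
      exact Algebra.commute_algebraMap_left r _
  | ι w =>
      apply hcc
      intro i j
      rw [g1_ι]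
      exact xu_commute_cc p q w i j
  | mul a b ha hb =>
      rw [map_mul]
      exact ha.mul_left hb
  | add a b ha hb =>
      rw [map_add]
      exact ha.add_left hb

/-- The inverse algebra hom. -/
noncomputable def psi :
    (CliffordAlgebra (Qpq p q) ⊗[ℝ] Matrix (Fin 2) (Fin 2) ℝ) →ₐ[ℝ]
      CliffordAlgebra (Qpq (p + 1) (q + 1)) :=
  Algebra.TensorProduct.lift (g1 p q) (g2 p q) (g_commute p q)

lemma psi_tmul (x : CliffordAlgebra (Qpq p q)) (m : Matrix (Fin 2) (Fin 2) ℝ) :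
    psi p q (x ⊗ₜ[ℝ] m) = g1 p q x * g2 p q m :=
  Algebra.TensorProduct.lift_tmul _ _ _ _ _


/-! ### Value computations -/

lemma phi_ee : phi p q (ee p q) = (1 : CliffordAlgebra (Qpq p q)) ⊗ₜ[ℝ] EE := by
  rw [ee, phi_ι, fmap_apply]
  have h0 : (Pi.single (ip p q) 1 : Fin ((p + 1) + (q + 1)) → ℝ) ∘ emb p q = 0 :=
    funext fun i => single_ip_emb p q i
  rw [h0, map_zero, TensorProduct.zero_tmul, Pi.single_eq_same,
    Pi.single_eq_of_ne (Ne.symm (ip_ne_il p q)), one_smul, zero_smul, zero_add, add_zero]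

lemma phi_ff : phi p q (ff p q) = (1 : CliffordAlgebra (Qpq p q)) ⊗ₜ[ℝ] FF := by
  rw [ff, phi_ι, fmap_apply]
  have h0 : (Pi.single (il p q) 1 : Fin ((p + 1) + (q + 1)) → ℝ) ∘ emb p q = 0 :=
    funext fun i => single_il_emb p q i
  rw [h0, map_zero, TensorProduct.zero_tmul, Pi.single_eq_same,
    Pi.single_eq_of_ne (ip_ne_il p q), one_smul, zero_smul, zero_add, zero_add]

lemma phi_uu : phi p q (uu p q) = (1 : CliffordAlgebra (Qpq p q)) ⊗ₜ[ℝ] GG := by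
  rw [uu, map_mul, phi_ee, phi_ff, Algebra.TensorProduct.tmul_mul_tmul, one_mul, hFE]

lemma phi_x (w : Fin (p + q) → ℝ) :
    phi p q (ι (Qpq (p + 1) (q + 1)) (extL p q w)) = (ι (Qpq p q) w) ⊗ₜ[ℝ] GG := by
  rw [phi_ι, fmap_apply, extL_comp_emb, extL_ip, extL_il, zero_smul, zero_smul,
    add_zero, add_zero]

lemma g2_EE : g2 p q EE = ee p q := by
  rw [g2_apply]
  have h00 : EE 0 0 = 0 := rfl
  have h01 : EE 0 1 = 1 := rfl
  have h10 : EE 1 0 = 1 := rfl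
  have h11 : EE 1 1 = 0 := rfl
  rw [h00, h01, h10, h11, cc00, cc01, cc10, cc11]
  module

lemma g2_FF : g2 p q FF = ff p q := by
  rw [g2_apply]
  have h00 : FF 0 0 = 0 := rfl
  have h01 : FF 0 1 = 1 := rfl
  have h10 : FF 1 0 = -1 := rfl
  have h11 : FF 1 1 = 0 := rfl
  rw [h00, h01, h10, h11, cc00, cc01, cc10, cc11]
  module

lemma g2_GG : g2 p q GG = uu p q := by
  rw [g2_apply]
  have h00 : GG 0 0 = 1 := rfl
  have h01 : GG 0 1 = 0 := rfl
  have h10 : GG 1 0 = 0 := rfl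
  have h11 : GG 1 1 = -1 := rfl
  rw [h00, h01, h10, h11, cc00, cc01, cc10, cc11]
  module

/-! ### The two composition identities -/

lemma comp1 : (psi p q).comp (phi p q) = AlgHom.id ℝ _ := by
  apply CliffordAlgebra.hom_ext
  apply LinearMap.ext
  intro v
  simp only [LinearMap.comp_apply, AlgHom.toLinearMap_apply, AlgHom.comp_apply,
    AlgHom.coe_id, id_eq]
  rw [phi_ι, fmap_apply, map_add, map_add, map_smul, map_smul, psi_tmul, psi_tmul, psi_tmul]
  rw [g1_ι, map_one, one_mul, one_mul, g2_EE, g2_FF, g2_GG]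
  rw [mul_assoc, uu_sq, mul_one]
  rw [ee, ff, ← map_smul (ι (Qpq (p + 1) (q + 1))), ← map_smul (ι (Qpq (p + 1) (q + 1))),
    ← map_add, ← map_add, reconstruct]

lemma phi_comp_g1 : (phi p q).comp (g1 p q)
    = Algebra.TensorProduct.includeLeft (S := ℝ) := by
  apply CliffordAlgebra.hom_ext
  apply LinearMap.ext
  intro w
  simp only [LinearMap.comp_apply, AlgHom.toLinearMap_apply, AlgHom.comp_apply,
    Algebra.TensorProduct.includeLeft_apply]
  rw [g1_ι, map_mul, phi_x, phi_uu, Algebra.TensorProduct.tmul_mul_tmul, mul_one, hGG]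

lemma phi_g2 (y : Matrix (Fin 2) (Fin 2) ℝ) :
    phi p q (g2 p q y) = (1 : CliffordAlgebra (Qpq p q)) ⊗ₜ[ℝ] y := by
  rw [g2_apply, cc00, cc01, cc10, cc11]
  simp only [map_add, map_smul, map_sub, map_one, phi_uu, phi_ee, phi_ff]
  conv_rhs => rw [matrix_decomp y]
  simp only [TensorProduct.tmul_add, TensorProduct.tmul_sub, TensorProduct.tmul_smul,
    ← Algebra.TensorProduct.one_def]
  try module

lemma comp2 : (phi p q).comp (psi p q) = AlgHom.id ℝ _ := by
  apply Algebra.TensorProduct.ext'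
  intro x y
  rw [AlgHom.comp_apply, psi_tmul, map_mul, phi_g2, AlgHom.id_apply]
  have hx : phi p q (g1 p q x) = x ⊗ₜ[ℝ] 1 := by
    have := congrArg (fun f => (f : _ →ₐ[ℝ] _) x) (phi_comp_g1 p q)
    simpa using this
  rw [hx, Algebra.TensorProduct.tmul_mul_tmul, one_mul, mul_one]

end CP11

open scoped TensorProduct in
theorem clifford_periodicity_one_one (p q : ℕ) :
    Nonempty (CliffordAlgebra (Qpq (p + 1) (q + 1)) ≃ₐ[ℝ]
      (CliffordAlgebra (Qpq p q) ⊗[ℝ] Matrix (Fin 2) (Fin 2) ℝ)) := by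
  exact ⟨AlgEquiv.ofAlgHom (CP11.phi p q) (CP11.psi p q) (CP11.comp2 p q) (CP11.comp1 p q)⟩
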